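/- arXiv:2410.01069 — 5 statements merged into one kernel-verified Lean document; each statement's English description precedes it below -/
import Mathlib

section
/- For every s ∈ ℂ with Re(s) > 1, the Dirichlet eta series equals the eta integral: ∑_{n=1}^{∞} (−1)^{n−1}/n^{s} = (1/Γ(s)) ∫_{0}^{∞} t^{s−1}/(e^{t}+1) dt, where for t > 0 the complex power t^{s−1} means exp((s−1)·log t). -/
open MeasureTheory Set

lemma eta_hasSum_aux (t : ℝ) (ht : t ∈ Set.Ioi (0:ℝ)) :
    HasSum (fun n : ℕ+ ↦ ((-1:ℂ) ^ ((n:ℕ) - 1)) * Real.exp (-(n:ℝ) * t))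
      (1 / ((Real.exp t + 1 : ℝ) : ℂ)) := by
  have ht' : (0:ℝ) < t := ht
  set x : ℂ := ((Real.exp (-t) : ℝ) : ℂ) with hxdef
  have hx : ‖(-x)‖ < 1 := by
    simp only [norm_neg, x, Complex.norm_real, Real.norm_eq_abs, Real.abs_exp]
    exact Real.exp_lt_one_iff.mpr (by linarith)
  have hgeo : HasSum (fun n : ℕ ↦ (-x) ^ n) (1 - (-x))⁻¹ :=
    hasSum_geometric_of_norm_lt_one hx
  have h1x : (1 : ℂ) + x ≠ 0 := by
    rw [hxdef, ← Complex.ofReal_one, ← Complex.ofReal_add]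
    exact Complex.ofReal_ne_zero.mpr (by positivity)
  have key : HasSum (fun n : ℕ ↦ -(-x) ^ (n + 1)) (x / (1 + x)) := by
    have := ((hasSum_nat_add_iff' 1).mpr hgeo).neg
    convert this using 1
    · rfl
    simp only [Finset.range_one, Finset.sum_singleton, pow_zero, sub_neg_eq_add]
    field_simp
    ring
  have hre : Real.exp (-t) / (1 + Real.exp (-t)) = 1 / (Real.exp t + 1) := by
    rw [div_eq_div_iff (by positivity) (by positivity), mul_add, ← Real.exp_add]
    simp
  have hfin : x / (1 + x) = 1 / ((Real.exp t + 1 : ℝ) : ℂ) := by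
    rw [hxdef, show ((1:ℂ) + ((Real.exp (-t) : ℝ) : ℂ)) = ((1 + Real.exp (-t) : ℝ) : ℂ) by
      push_cast; ring, ← Complex.ofReal_div, hre, Complex.ofReal_div]
    push_cast; ring
  rw [hfin] at key
  rw [← Equiv.pnatEquivNat.symm.hasSum_iff]
  convert key using 2 with n
  have : (Equiv.pnatEquivNat.symm n : ℕ) = n + 1 := rfl
  simp only [Function.comp_apply, this]
  have hpow : ((-1:ℂ)) ^ ((n + 1) - 1) = (-1:ℂ) ^ n := by norm_num
  rw [hpow]
  rw [neg_pow, show (-x)^(n+1) = (-1:ℂ)^(n+1) * x^(n+1) by rw [neg_pow]]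
  have hxpow : x ^ (n + 1) = (Real.exp (-((n + 1 : ℕ) : ℝ) * t) : ℝ) := by
    simp only [x, ← Complex.ofReal_pow, ← Real.exp_nat_mul]
    norm_num
    ring_nf
  rw [hxpow]
  push_cast
  ring

/-- Integral representation of the Dirichlet eta function for `Re s > 1`:
`∑_{n=1}^∞ (-1)^{n-1}/n^s = (1/Γ(s)) ∫_0^∞ t^{s-1}/(exp t + 1) dt`. -/
theorem dirichlet_eta_series_eq_integral
    (s : ℂ) (hs : 1 < s.re) :
    ∑' n : ℕ+, (-1 : ℂ) ^ ((n : ℕ) - 1) / ((n : ℕ) : ℂ) ^ s =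
      (1 / Complex.Gamma s) *
        ∫ t in Set.Ioi (0 : ℝ), ((t : ℝ) : ℂ) ^ (s - 1) / ((Real.exp t + 1 : ℝ) : ℂ) := by
  have hs0 : 0 < s.re := by linarith
  have hsum : HasSum (fun n : ℕ+ ↦ Complex.Gamma s * ((-1:ℂ) ^ ((n:ℕ) - 1)) / ((n:ℝ) : ℂ) ^ s)
      (mellin (fun t ↦ 1 / ((Real.exp t + 1 : ℝ) : ℂ)) s) := by
    apply hasSum_mellin (fun n ↦ Or.inr (by exact_mod_cast n.pos)) hs0 eta_hasSum_aux
    have : Summable fun n : ℕ ↦ 1 / (n : ℝ) ^ s.re :=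
      Real.summable_one_div_nat_rpow.mpr hs
    have := this.comp_injective (fun (a b : ℕ+) (h : (a:ℕ) = (b:ℕ)) ↦ PNat.coe_injective h)
    refine this.congr fun n ↦ ?_
    simp [norm_pow]
  have hmel : mellin (fun t ↦ 1 / ((Real.exp t + 1 : ℝ) : ℂ)) s =
      ∫ t in Set.Ioi (0 : ℝ), ((t : ℝ) : ℂ) ^ (s - 1) / ((Real.exp t + 1 : ℝ) : ℂ) := by
    simp [mellin, smul_eq_mul, div_eq_mul_inv, mul_comm]
  rw [hmel] at hsum
  have hG : Complex.Gamma s ≠ 0 := Complex.Gamma_ne_zero (fun m ↦ by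
    intro h; rw [h] at hs; simp only [Complex.neg_re, Complex.natCast_re] at hs
    linarith [Nat.cast_nonneg (α := ℝ) m])
  have := hsum.tsum_eq
  rw [← this, ← tsum_mul_left]
  congr 1 with n
  field_simp
  rw [Complex.ofReal_natCast]
end

section
/- Let f : ℝ → ℝ be measurable and nonnegative, let α, β ∈ ℂ with Re(α) > 0 and Re(β) > 0, and let x ∈ ℝ. Assume that t ↦ (x−t)^{Re(α)+Re(β)−1} f(t) is integrable on (−∞, x] and that for every y ≤ x the function t ↦ (y−t)^{Re(β)−1} f(t) is integrable on (−∞, y]. Then the semigroup property holds: (1/Γ(α)) ∫_{−∞}^{x} (x−t)^{α−1} · [(1/Γ(β)) ∫_{−∞}^{t} (t−u)^{β−1} f(u) du] dt = (1/Γ(α+β)) ∫_{−∞}^{x} (x−t)^{α+β−1} f(t) dt, where for v > 0 the complex power v^{w} means exp(w·log v). -/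
open MeasureTheory Set

private lemma measurable_ofReal_cpow (w : ℂ) : Measurable fun r : ℝ => (r : ℂ) ^ w := by
  have h : (fun r : ℝ => (r : ℂ) ^ w)
      = fun r : ℝ => if (r : ℂ) = 0 then (if w = 0 then 1 else 0)
        else Complex.exp (Complex.log (r : ℂ) * w) := by
    funext r; rw [Complex.cpow_def]
  rw [h]
  have hs : MeasurableSet {r : ℝ | (r : ℂ) = 0} := by
    have : {r : ℝ | (r : ℂ) = 0} = {0} := by
      ext r; simp [Complex.ofReal_eq_zero]
    rw [this]; exact measurableSet_singleton 0
  exact Measurable.ite hs measurable_const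
    (Complex.measurable_exp.comp (Complex.measurable_ofReal.clog.mul_const w))

private lemma kernelII {α β : ℂ} (hα : 0 < α.re) (hβ : 0 < β.re) {u x : ℝ} (hux : u < x) :
    IntegrableOn (fun t : ℝ => ((x - t : ℝ) : ℂ) ^ (α - 1) * ((t - u : ℝ) : ℂ) ^ (β - 1))
      (Set.Ioc u x) := by
  have hc : (0:ℝ) < x - u := by linarith
  have h0 := Complex.betaIntegral_convergent hβ hα
  have h1 := (h0.comp_mul_left (c := (x - u)⁻¹)).comp_sub_right u
  rw [show (0:ℝ) / (x - u)⁻¹ + u = u by simp,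
      show (1:ℝ) / (x - u)⁻¹ + u = x by field_simp; ring] at h1
  have h2 := (intervalIntegrable_iff_integrableOn_Ioc_of_le hux.le).1 h1
  have h3 := h2.const_mul (((x - u : ℝ) : ℂ) ^ (β - 1) * ((x - u : ℝ) : ℂ) ^ (α - 1))
  refine h3.congr ?_
  refine (ae_restrict_iff' measurableSet_Ioc).2 (Filter.Eventually.of_forall fun t hmem => ?_)
  beta_reduce
  have hs0 : (0:ℝ) ≤ (x - u)⁻¹ * (t - u) := by
    have : (0:ℝ) ≤ t - u := by linarith [hmem.1]
    positivity
  have hs1 : (x - u)⁻¹ * (t - u) ≤ 1 := by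
    rw [inv_mul_le_iff₀ hc, mul_one]
    linarith [hmem.2]
  have e1 : ((t - u : ℝ) : ℂ) ^ (β - 1)
      = ((x - u : ℝ) : ℂ) ^ (β - 1) * (((x - u)⁻¹ * (t - u) : ℝ) : ℂ) ^ (β - 1) := by
    rw [← Complex.mul_cpow_ofReal_nonneg hc.le hs0]
    congr 1
    norm_cast
    field_simp
  have e2 : ((x - t : ℝ) : ℂ) ^ (α - 1)
      = ((x - u : ℝ) : ℂ) ^ (α - 1) * ((1 : ℂ) - (((x - u)⁻¹ * (t - u) : ℝ) : ℂ)) ^ (α - 1) := by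
    rw [show ((1 : ℂ) - (((x - u)⁻¹ * (t - u) : ℝ) : ℂ)) = ((1 - (x - u)⁻¹ * (t - u) : ℝ) : ℂ) by
          push_cast; ring,
        ← Complex.mul_cpow_ofReal_nonneg hc.le (by linarith : (0:ℝ) ≤ 1 - (x - u)⁻¹ * (t - u))]
    congr 1
    norm_cast
    field_simp
    ring
  rw [e1, e2]
  ring

private lemma kernelInt (α β : ℂ) {u x : ℝ} (hux : u < x) :
    ∫ t in Set.Ioc u x, ((x - t : ℝ) : ℂ) ^ (α - 1) * ((t - u : ℝ) : ℂ) ^ (β - 1)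
      = ((x - u : ℝ) : ℂ) ^ (β + α - 1) * Complex.betaIntegral β α := by
  rw [← intervalIntegral.integral_of_le hux.le]
  have h := intervalIntegral.integral_comp_sub_right (a := u) (b := x)
      (fun s : ℝ => ((s : ℝ) : ℂ) ^ (β - 1) * (((x - u : ℝ) : ℂ) - ((s : ℝ) : ℂ)) ^ (α - 1)) u
  have h2 : ∀ t : ℝ, ((t - u : ℝ) : ℂ) ^ (β - 1) * (((x - u : ℝ) : ℂ) - ((t - u : ℝ) : ℂ)) ^ (α - 1)
      = ((x - t : ℝ) : ℂ) ^ (α - 1) * ((t - u : ℝ) : ℂ) ^ (β - 1) := by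
    intro t
    rw [show ((x - u : ℝ) : ℂ) - ((t - u : ℝ) : ℂ) = ((x - t : ℝ) : ℂ) by push_cast; ring]
    exact mul_comm _ _
  simp only [h2, sub_self] at h
  rw [h]
  exact Complex.betaIntegral_scaled β α (by linarith)

private lemma kernelIntReal {a b : ℝ} {u x : ℝ} (hux : u < x) :
    ∫ t in Set.Ioc u x, (x - t) ^ (a - 1) * (t - u) ^ (b - 1)
      = (x - u) ^ (b + a - 1) * (Complex.betaIntegral (b : ℂ) (a : ℂ)).re := by
  have h := kernelInt (a : ℂ) (b : ℂ) hux
  have e : ∀ t ∈ Set.Ioc u x, (((x - t) ^ (a - 1) * (t - u) ^ (b - 1) : ℝ) : ℂ)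
      = ((x - t : ℝ) : ℂ) ^ ((a : ℂ) - 1) * ((t - u : ℝ) : ℂ) ^ ((b : ℂ) - 1) := by
    intro t ht
    rw [Complex.ofReal_mul, Complex.ofReal_cpow (by linarith [ht.2] : (0:ℝ) ≤ x - t),
        Complex.ofReal_cpow (by linarith [ht.1] : (0:ℝ) ≤ t - u)]
    push_cast
    ring
  have h2 : ((∫ t in Set.Ioc u x, (x - t) ^ (a - 1) * (t - u) ^ (b - 1) : ℝ) : ℂ)
      = ((((x - u) ^ (b + a - 1) : ℝ)) : ℂ) * Complex.betaIntegral (b : ℂ) (a : ℂ) := by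
    calc ((∫ t in Set.Ioc u x, (x - t) ^ (a - 1) * (t - u) ^ (b - 1) : ℝ) : ℂ)
        = ∫ t in Set.Ioc u x, (((x - t) ^ (a - 1) * (t - u) ^ (b - 1) : ℝ) : ℂ) :=
          (integral_ofReal (𝕜 := ℂ)).symm
      _ = ∫ t in Set.Ioc u x, ((x - t : ℝ) : ℂ) ^ ((a : ℂ) - 1) * ((t - u : ℝ) : ℂ) ^ ((b : ℂ) - 1) :=
          setIntegral_congr_fun measurableSet_Ioc e
      _ = ((x - u : ℝ) : ℂ) ^ ((b : ℂ) + (a : ℂ) - 1) * Complex.betaIntegral (b : ℂ) (a : ℂ) := h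
      _ = ((((x - u) ^ (b + a - 1) : ℝ)) : ℂ) * Complex.betaIntegral (b : ℂ) (a : ℂ) := by
          rw [Complex.ofReal_cpow (by linarith : (0:ℝ) ≤ x - u)]
          push_cast
          ring
  have h3 := congrArg Complex.re h2
  simpa [Complex.re_ofReal_mul] using h3

/-- Semigroup property of lower-bounded Riemann–Liouville fractional integrals with
lower bound `-∞`, for a nonnegative measurable function under integrability hypotheses. -/
theorem riemannLiouville_improper_semigroup
    (f : ℝ → ℝ) (hf : Measurable f) (hf0 : ∀ t : ℝ, 0 ≤ f t)
    (α β : ℂ) (hα : 0 < α.re) (hβ : 0 < β.re) (x : ℝ)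
    (hint : IntegrableOn
      (fun t : ℝ => (x - t) ^ (α.re + β.re - 1) * f t) (Set.Iic x))
    (hint' : ∀ y : ℝ, y ≤ x →
      IntegrableOn (fun t : ℝ => (y - t) ^ (β.re - 1) * f t) (Set.Iic y)) :
    (1 / Complex.Gamma α) *
        ∫ t in Set.Iic x, ((x - t : ℝ) : ℂ) ^ (α - 1) *
          ((1 / Complex.Gamma β) *
            ∫ u in Set.Iic t, ((t - u : ℝ) : ℂ) ^ (β - 1) * (f u : ℂ)) =
      (1 / Complex.Gamma (α + β)) *
        ∫ t in Set.Iic x, ((x - t : ℝ) : ℂ) ^ (α + β - 1) * (f t : ℂ) := by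
  set K : ℝ → ℝ → ℂ := fun t u => ((x - t : ℝ) : ℂ) ^ (α - 1) *
      Set.indicator (Set.Iic t) (fun u => ((t - u : ℝ) : ℂ) ^ (β - 1) * (f u : ℂ)) u with hK
  set Br : ℝ := (Complex.betaIntegral (β.re : ℂ) (α.re : ℂ)).re with hBr
  -- measurability
  have measK : Measurable (Function.uncurry K) := by
    have huncurry : Function.uncurry K = fun p : ℝ × ℝ =>
        ((x - p.1 : ℝ) : ℂ) ^ (α - 1) *
          Set.indicator {q : ℝ × ℝ | q.2 ≤ q.1}
            (fun q => ((q.1 - q.2 : ℝ) : ℂ) ^ (β - 1) * (f q.2 : ℂ)) p := by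
      funext p
      by_cases h : p.2 ≤ p.1 <;>
        simp [Function.uncurry, hK, Set.indicator_apply, h]
    rw [huncurry]
    exact ((measurable_ofReal_cpow (α - 1)).comp (measurable_const.sub measurable_fst)).mul
      ((((measurable_ofReal_cpow (β - 1)).comp (measurable_fst.sub measurable_snd)).mul
        (Complex.measurable_ofReal.comp (hf.comp measurable_snd))).indicator
        (measurableSet_le measurable_snd measurable_fst))
  have aene : ∀ c : ℝ, ∀ᵐ t : ℝ, t ≠ c := fun c => by
    rw [MeasureTheory.ae_iff]
    simp [Set.setOf_eq_eq_singleton]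
  -- zero for u ≥ x
  have hzero : ∀ u : ℝ, x ≤ u → (fun t => K t u) =ᵐ[volume.restrict (Set.Iic x)] 0 := by
    intro u hu
    filter_upwards [ae_restrict_mem measurableSet_Iic, ae_restrict_of_ae (aene u)] with t ht htu
    have hnm : u ∉ Set.Iic t := by
      simp only [Set.mem_Iic, not_le]
      exact lt_of_le_of_ne (le_trans ht hu) htu
    simp [hK, Set.indicator_of_notMem hnm]
  -- splitting for u < x (complex version)
  have hlt : ∀ u : ℝ, u < x → (fun t => K t u) =ᵐ[volume.restrict (Set.Iic x)]
      (fun t => Set.indicator (Set.Ioc u x)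
        (fun t => (((x - t : ℝ) : ℂ) ^ (α - 1) * ((t - u : ℝ) : ℂ) ^ (β - 1)) * (f u : ℂ)) t) := by
    intro u hu
    filter_upwards [ae_restrict_mem measurableSet_Iic, ae_restrict_of_ae (aene u)] with t ht htu
    rcases lt_or_gt_of_ne htu with h1 | h1
    · rw [Set.indicator_of_notMem (fun hmem => absurd hmem.1 (not_lt.2 h1.le))]
      have hnm : u ∉ Set.Iic t := by simp only [Set.mem_Iic, not_le]; exact h1
      simp [hK, Set.indicator_of_notMem hnm]
    · rw [Set.indicator_of_mem (show t ∈ Set.Ioc u x from ⟨h1, ht⟩)]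
      simp only [hK, Set.indicator_of_mem (Set.mem_Iic.2 h1.le)]
      ring
  -- norm version for u < x
  have hnorm : ∀ u : ℝ, u < x → (fun t => ‖K t u‖) =ᵐ[volume.restrict (Set.Iic x)]
      (fun t => Set.indicator (Set.Ioc u x)
        (fun t => ((x - t) ^ (α.re - 1) * (t - u) ^ (β.re - 1)) * f u) t) := by
    intro u hu
    filter_upwards [ae_restrict_mem measurableSet_Iic, ae_restrict_of_ae (aene u),
      ae_restrict_of_ae (aene x)] with t ht htu htx
    have ht' : t < x := lt_of_le_of_ne ht htx
    rcases lt_or_gt_of_ne htu with h1 | h1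
    · rw [Set.indicator_of_notMem (fun hmem => absurd hmem.1 (not_lt.2 h1.le))]
      have hnm : u ∉ Set.Iic t := by simp only [Set.mem_Iic, not_le]; exact h1
      simp [hK, Set.indicator_of_notMem hnm]
    · rw [Set.indicator_of_mem (show t ∈ Set.Ioc u x from ⟨h1, ht⟩)]
      simp only [hK, Set.indicator_of_mem (Set.mem_Iic.2 h1.le)]
      rw [norm_mul, norm_mul,
        Complex.norm_cpow_eq_rpow_re_of_pos (by linarith : (0:ℝ) < x - t),
        Complex.norm_cpow_eq_rpow_re_of_pos (by linarith : (0:ℝ) < t - u),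
        Complex.sub_re, Complex.one_re, Complex.sub_re, Complex.one_re,
        Complex.norm_real, Real.norm_of_nonneg (hf0 u)]
      ring
  -- integrability in t for each u
  have hIntK : ∀ u : ℝ, Integrable (fun t => K t u) (volume.restrict (Set.Iic x)) := by
    intro u
    rcases lt_or_ge u x with hu | hu
    · exact ((MeasureTheory.IntegrableOn.integrable_indicator
        ((kernelII hα hβ hu).mul_const ((f u : ℂ))) measurableSet_Ioc).restrict).congr
        (hlt u hu).symm
    · exact (integrable_zero _ _ _).congr (hzero u hu).symm
  -- integrability of the norm integrals in u
  have cond3 : Integrable (fun u => ∫ t, ‖K t u‖ ∂(volume.restrict (Set.Iic x))) volume := by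
    have he : (fun u => ∫ t, ‖K t u‖ ∂(volume.restrict (Set.Iic x))) =ᵐ[volume]
        Set.indicator (Set.Iic x) (fun u => ((x - u) ^ (α.re + β.re - 1) * f u) * Br) := by
      filter_upwards [aene x] with u hux
      rcases lt_or_ge u x with hu | hu
      · rw [Set.indicator_of_mem (Set.mem_Iic.2 hu.le),
          integral_congr_ae (hnorm u hu), setIntegral_indicator measurableSet_Ioc,
          Set.inter_eq_right.mpr Set.Ioc_subset_Iic_self, MeasureTheory.integral_mul_const,
          kernelIntReal hu, ← hBr, show β.re + α.re - 1 = α.re + β.re - 1 by ring]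
        ring
      · have hu' : x < u := lt_of_le_of_ne hu (Ne.symm hux)
        rw [Set.indicator_of_notMem (by simpa using hu'.not_ge)]
        have hz : (fun t => ‖K t u‖) =ᵐ[volume.restrict (Set.Iic x)] (fun _ => (0:ℝ)) := by
          filter_upwards [hzero u hu'.le] with t h
          rw [h]; simp
        rw [integral_congr_ae hz, integral_zero]
    exact (MeasureTheory.IntegrableOn.integrable_indicator (hint.mul_const Br)
      measurableSet_Iic).congr he.symm
  -- product integrability and Fubini
  have hprod : Integrable (Function.uncurry K) ((volume.restrict (Set.Iic x)).prod volume) :=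
    (integrable_prod_iff' measK.aestronglyMeasurable).2
      ⟨Filter.Eventually.of_forall hIntK, cond3⟩
  have swap := MeasureTheory.integral_integral_swap hprod
  -- identify LHS
  have hLHS : (∫ t in Set.Iic x, ((x - t : ℝ) : ℂ) ^ (α - 1) *
        ((1 / Complex.Gamma β) * ∫ u in Set.Iic t, ((t - u : ℝ) : ℂ) ^ (β - 1) * (f u : ℂ)))
      = (1 / Complex.Gamma β) * ∫ t in Set.Iic x, (∫ u, K t u ∂volume) := by
    rw [← MeasureTheory.integral_const_mul]
    refine integral_congr_ae (Filter.Eventually.of_forall fun t => ?_)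
    have hin : (∫ u, K t u ∂volume) = ((x - t : ℝ) : ℂ) ^ (α - 1) *
        ∫ u in Set.Iic t, ((t - u : ℝ) : ℂ) ^ (β - 1) * (f u : ℂ) := by
      simp only [hK]
      rw [MeasureTheory.integral_const_mul, MeasureTheory.integral_indicator measurableSet_Iic]
    beta_reduce
    rw [hin]
    ring
  -- identify RHS of swap
  have hswapRHS : (∫ u, (∫ t, K t u ∂(volume.restrict (Set.Iic x))) ∂volume)
      = Complex.betaIntegral β α *
        ∫ t in Set.Iic x, ((x - t : ℝ) : ℂ) ^ (α + β - 1) * (f t : ℂ) := by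
    have he : (fun u => ∫ t, K t u ∂(volume.restrict (Set.Iic x))) =ᵐ[volume]
        Set.indicator (Set.Iic x)
          (fun u => Complex.betaIntegral β α * (((x - u : ℝ) : ℂ) ^ (α + β - 1) * (f u : ℂ))) := by
      filter_upwards [aene x] with u hux
      rcases lt_or_ge u x with hu | hu
      · rw [Set.indicator_of_mem (Set.mem_Iic.2 hu.le), integral_congr_ae (hlt u hu),
          setIntegral_indicator measurableSet_Ioc,
          Set.inter_eq_right.mpr Set.Ioc_subset_Iic_self, MeasureTheory.integral_mul_const,
          kernelInt α β hu, show β + α - 1 = α + β - 1 by ring]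
        ring
      · have hu' : x < u := lt_of_le_of_ne hu (Ne.symm hux)
        have hz : (fun t => K t u) =ᵐ[volume.restrict (Set.Iic x)] (fun _ => (0:ℂ)) := by
          filter_upwards [hzero u hu'.le] with t h
          simpa using h
        rw [Set.indicator_of_notMem (by simpa using hu'.not_ge),
          integral_congr_ae hz, integral_zero]
    rw [integral_congr_ae he, MeasureTheory.integral_indicator measurableSet_Iic,
      MeasureTheory.integral_const_mul]
  -- assemble
  rw [hLHS, ← mul_assoc, swap, hswapRHS]
  have hGα := Complex.Gamma_ne_zero_of_re_pos hα
  have hGβ := Complex.Gamma_ne_zero_of_re_pos hβ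
  have hGαβ := Complex.Gamma_ne_zero_of_re_pos (s := α + β)
    (by rw [Complex.add_re]; linarith)
  have hmul : Complex.Gamma β * Complex.Gamma α
      = Complex.Gamma (α + β) * Complex.betaIntegral β α := by
    rw [show α + β = β + α from add_comm α β]
    exact Complex.Gamma_mul_Gamma_eq_betaIntegral hβ hα
  set I := ∫ t in Set.Iic x, ((x - t : ℝ) : ℂ) ^ (α + β - 1) * (f t : ℂ)
  field_simp
  linear_combination -I * hmul
end

section
/- Let f(t) = 1/(e^{−t}+1), let s ∈ ℂ with Re(s) > 0, and let x < 0. Then the function x ↦ (1/Γ(s+1)) ∫_{−∞}^{x} (x−t)^{s}/(e^{−t}+1) dt is differentiable at x with derivative (1/Γ(s)) ∫_{−∞}^{x} (x−t)^{s−1}/(e^{−t}+1) dt; that is, (d/dx)(₋∞I_x^{s+1} f)(x) = (₋∞I_x^{s} f)(x). Here for u > 0 the complex power u^{w} means exp(w·log u). -/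
open MeasureTheory Set

noncomputable def RLpsi (t : ℝ) : ℝ := (Real.exp (-t) + 1)⁻¹
noncomputable def RLd (t : ℝ) : ℝ := Real.exp (-t) * ((Real.exp (-t) + 1) ^ 2)⁻¹

lemma RLpos (t : ℝ) : 0 < Real.exp (-t) + 1 := by positivity

lemma RLpsi_deriv (t : ℝ) : HasDerivAt RLpsi (RLd t) t := by
  have h1 : HasDerivAt (fun t : ℝ => Real.exp (-t) + 1) (-Real.exp (-t)) t := by
    simpa using (((Real.hasDerivAt_exp (-t)).comp t ((hasDerivAt_id t).neg)).add_const 1)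
  have := h1.inv (RLpos t).ne'
  rw [show RLpsi = (fun t : ℝ => Real.exp (-t) + 1)⁻¹ from rfl]
  simpa [RLpsi, RLd, div_eq_mul_inv] using this

lemma RLpsi_nonneg (t : ℝ) : 0 ≤ RLpsi t := by unfold RLpsi; positivity

lemma RLpsi_le (t : ℝ) : RLpsi t ≤ Real.exp t := by
  unfold RLpsi
  rw [show Real.exp t = (Real.exp (-t))⁻¹ by rw [← Real.exp_neg, neg_neg]]
  exact inv_anti₀ (Real.exp_pos _) (by linarith [Real.exp_pos (-t)])

lemma RLd_nonneg (t : ℝ) : 0 ≤ RLd t := by unfold RLd; positivity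

lemma RLd_le (t : ℝ) : RLd t ≤ Real.exp t := by
  unfold RLd
  rw [show Real.exp t = (Real.exp (-t))⁻¹ by rw [← Real.exp_neg, neg_neg]]
  have h1 : Real.exp (-t) ^ 2 ≤ (Real.exp (-t) + 1) ^ 2 := by
    apply pow_le_pow_left₀ (Real.exp_pos _).le; linarith
  calc Real.exp (-t) * ((Real.exp (-t) + 1) ^ 2)⁻¹
      ≤ Real.exp (-t) * (Real.exp (-t) ^ 2)⁻¹ := by
        apply mul_le_mul_of_nonneg_left _ (Real.exp_pos _).le
        exact inv_anti₀ (by positivity) h1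
    _ = (Real.exp (-t))⁻¹ := by field_simp

lemma RLpsi_cont : Continuous RLpsi :=
  ((Real.continuous_exp.comp continuous_neg).add continuous_const).inv₀
    fun t => (RLpos t).ne'

lemma RLd_cont : Continuous RLd :=
  (Real.continuous_exp.comp continuous_neg).mul
    ((((Real.continuous_exp.comp continuous_neg).add continuous_const).pow 2).inv₀
      fun t => (by positivity : (0:ℝ) < (Real.exp (-t) + 1) ^ 2).ne')

lemma RLaux_cov (g : ℝ → ℂ) (y : ℝ) :
    ∫ t in Iic y, g t = ∫ u in Ioi (0:ℝ), g (y - u) := by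
  have hm : MeasurePreserving (fun u : ℝ => y - u) volume volume :=
    Measure.measurePreserving_sub_left volume y
  have he : MeasurableEmbedding (fun u : ℝ => y - u) :=
    (Homeomorph.subLeft y).measurableEmbedding
  have := hm.setIntegral_preimage_emb he g (Iic y)
  have hpre : (fun u : ℝ => y - u) ⁻¹' (Iic y) = Ici 0 := by
    ext u; simp [sub_le_iff_le_add]
  rw [hpre] at this
  rw [← this, integral_Ici_eq_integral_Ioi]

lemma RLcpow_deriv {s : ℂ} (hs0 : s ≠ 0) {u : ℝ} (hu : u ≠ 0) :
    HasDerivAt (fun v : ℝ => (v : ℂ) ^ s) (s * (u : ℂ) ^ (s - 1)) u := by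
  have hne : s - 1 ≠ -1 := by
    intro h; apply hs0; have := congrArg (· + 1) h; simpa using this
  have h := (hasDerivAt_ofReal_cpow_const' hu hne).const_mul s
  have heq : (fun v : ℝ => s * ((v : ℂ) ^ (s - 1 + 1) / (s - 1 + 1))) =
      fun v : ℝ => (v : ℂ) ^ s := by
    funext v; rw [sub_add_cancel, mul_div_cancel₀ _ hs0]
  rw [heq] at h
  simpa [mul_comm] using h

lemma RLnorm_cpow {u : ℝ} (hu : 0 < u) (w : ℂ) : ‖(u : ℂ) ^ w‖ = u ^ w.re := by
  rw [Complex.norm_cpow_eq_rpow_re_of_pos hu]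

lemma RLint {a : ℝ} (ha : -1 < a) :
    IntegrableOn (fun u : ℝ => u ^ a * Real.exp (-u)) (Ioi 0) := by
  have := integrableOn_rpow_mul_exp_neg_rpow ha one_pos
  simpa using this

lemma RLtend (a : ℝ) :
    Filter.Tendsto (fun u : ℝ => u ^ a * Real.exp (-u)) Filter.atTop (nhds 0) := by
  simpa using tendsto_rpow_mul_exp_neg_mul_atTop_nhds_zero a 1 one_pos

/-- Differentiating the improper Riemann–Liouville fractional integral of order `s + 1`
of the logistic function `f t = 1/(exp (-t) + 1)` gives the one of order `s`:
`(d/dx)(₋∞I_x^{s+1} f)(x) = (₋∞I_x^{s} f)(x)` for `Re s > 0` and `x < 0`. -/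
theorem riemannLiouville_logistic_hasDerivAt
    (s : ℂ) (hs : 0 < s.re) (x : ℝ) (hx : x < 0) :
    HasDerivAt
      (fun y : ℝ => (1 / Complex.Gamma (s + 1)) *
        ∫ t in Set.Iic y, ((y - t : ℝ) : ℂ) ^ s / ((Real.exp (-t) + 1 : ℝ) : ℂ))
      ((1 / Complex.Gamma s) *
        ∫ t in Set.Iic x, ((x - t : ℝ) : ℂ) ^ (s - 1) / ((Real.exp (-t) + 1 : ℝ) : ℂ))
      x := by
  have hs0 : s ≠ 0 := by
    intro h; rw [h] at hs; simp at hs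
  -- change of variables
  have hcov : ∀ (w : ℂ) (y : ℝ),
      (∫ t in Iic y, ((y - t : ℝ) : ℂ) ^ w / ((Real.exp (-t) + 1 : ℝ) : ℂ)) =
      ∫ u in Ioi (0:ℝ), (u : ℂ) ^ w * ((RLpsi (y - u) : ℝ) : ℂ) := by
    intro w y
    rw [RLaux_cov (fun t => ((y - t : ℝ) : ℂ) ^ w / ((Real.exp (-t) + 1 : ℝ) : ℂ)) y]
    refine setIntegral_congr_fun measurableSet_Ioi fun u _ => ?_
    simp [RLpsi, sub_sub_cancel, div_eq_mul_inv]
  -- measurability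
  have hmeas : ∀ (w : ℂ) (y : ℝ), AEStronglyMeasurable
      (fun u : ℝ => (u:ℂ)^w * ((RLpsi (y - u) : ℝ):ℂ)) (volume.restrict (Ioi 0)) := by
    intro w y
    refine ContinuousOn.aestronglyMeasurable ?_ measurableSet_Ioi
    intro u hu
    exact ((Complex.continuousAt_ofReal_cpow_const u w (Or.inr (ne_of_gt hu))).continuousWithinAt.mul
      (Complex.continuous_ofReal.comp
        (RLpsi_cont.comp (continuous_const.sub continuous_id))).continuousWithinAt)
  have hdmeas : ∀ (y : ℝ), AEStronglyMeasurable
      (fun u : ℝ => (u:ℂ)^s * ((RLd (y - u) : ℝ):ℂ)) (volume.restrict (Ioi 0)) := by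
    intro y
    refine ContinuousOn.aestronglyMeasurable ?_ measurableSet_Ioi
    intro u hu
    exact ((Complex.continuousAt_ofReal_cpow_const u s (Or.inr (ne_of_gt hu))).continuousWithinAt.mul
      (Complex.continuous_ofReal.comp
        (RLd_cont.comp (continuous_const.sub continuous_id))).continuousWithinAt)
  -- integrability of the psi-type integrands
  have hint : ∀ (w : ℂ), -1 < w.re → ∀ (y : ℝ),
      Integrable (fun u : ℝ => (u:ℂ)^w * ((RLpsi (y - u) : ℝ):ℂ))
        (volume.restrict (Ioi 0)) := by
    intro w hw y
    refine Integrable.mono (((RLint hw).const_mul (Real.exp y)))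
      (hmeas w y) ?_
    rw [ae_restrict_iff' measurableSet_Ioi]
    filter_upwards with u hu
    rw [norm_mul, RLnorm_cpow hu, Complex.norm_real, Real.norm_eq_abs,
      abs_of_nonneg (RLpsi_nonneg _), Real.norm_eq_abs]
    have h1 : RLpsi (y - u) ≤ Real.exp y * Real.exp (-u) := by
      rw [← Real.exp_add]
      simpa [sub_eq_add_neg] using RLpsi_le (y - u)
    have h2 : (0:ℝ) ≤ u ^ w.re := Real.rpow_nonneg hu.le _
    calc u ^ w.re * RLpsi (y - u) ≤ u ^ w.re * (Real.exp y * Real.exp (-u)) :=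
          mul_le_mul_of_nonneg_left h1 h2
      _ ≤ |Real.exp y * (u ^ w.re * Real.exp (-u))| := by
          rw [abs_of_nonneg (by positivity)]; ring_nf; exact le_refl _
  -- integrability of the d-type integrand
  have hintd : ∀ (y : ℝ),
      Integrable (fun u : ℝ => (u:ℂ)^s * ((RLd (y - u) : ℝ):ℂ))
        (volume.restrict (Ioi 0)) := by
    intro y
    refine Integrable.mono (((RLint (by linarith : (-1:ℝ) < s.re)).const_mul
      (Real.exp y))) (hdmeas y) ?_
    rw [ae_restrict_iff' measurableSet_Ioi]
    filter_upwards with u hu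
    rw [norm_mul, RLnorm_cpow hu, Complex.norm_real, Real.norm_eq_abs,
      abs_of_nonneg (RLd_nonneg _), Real.norm_eq_abs]
    have h1 : RLd (y - u) ≤ Real.exp y * Real.exp (-u) := by
      rw [← Real.exp_add]
      simpa [sub_eq_add_neg] using RLd_le (y - u)
    have h2 : (0:ℝ) ≤ u ^ s.re := Real.rpow_nonneg hu.le _
    calc u ^ s.re * RLd (y - u) ≤ u ^ s.re * (Real.exp y * Real.exp (-u)) :=
          mul_le_mul_of_nonneg_left h1 h2
      _ ≤ |Real.exp y * (u ^ s.re * Real.exp (-u))| := by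
          rw [abs_of_nonneg (by positivity)]; ring_nf; exact le_refl _
  -- derivative under the integral sign
  have key := hasDerivAt_integral_of_dominated_loc_of_deriv_le
    (μ := volume.restrict (Ioi (0:ℝ))) (x₀ := x)
    (F := fun y u => (u:ℂ)^s * ((RLpsi (y - u) : ℝ):ℂ))
    (F' := fun y u => (u:ℂ)^s * ((RLd (y - u) : ℝ):ℂ))
    (bound := fun u => Real.exp (x + 1) * (u ^ s.re * Real.exp (-u)))
    (Metric.ball_mem_nhds x one_pos)
    (Filter.Eventually.of_forall fun y => hmeas s y)
    (hint s (by linarith) x)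
    (hdmeas x)
    ?_ (((RLint (by linarith : (-1:ℝ) < s.re)).const_mul (Real.exp (x+1))))
    ?_
  rotate_left
  · -- bound
    rw [ae_restrict_iff' measurableSet_Ioi]
    filter_upwards with u hu y hy
    rw [norm_mul, RLnorm_cpow hu, Complex.norm_real, Real.norm_eq_abs,
      abs_of_nonneg (RLd_nonneg _)]
    have hylt : y < x + 1 := by
      have := abs_lt.mp (by simpa [Real.dist_eq] using Metric.mem_ball.mp hy)
      linarith [this.2]
    have h1 : RLd (y - u) ≤ Real.exp (x + 1) * Real.exp (-u) := by
      rw [← Real.exp_add]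
      exact (RLd_le (y - u)).trans (Real.exp_le_exp.mpr (by linarith))
    have h2 : (0:ℝ) ≤ u ^ s.re := Real.rpow_nonneg hu.le _
    calc u ^ s.re * RLd (y - u) ≤ u ^ s.re * (Real.exp (x+1) * Real.exp (-u)) :=
          mul_le_mul_of_nonneg_left h1 h2
      _ = Real.exp (x+1) * (u ^ s.re * Real.exp (-u)) := by ring
  · -- differentiability in y
    filter_upwards with u y _
    have hr : HasDerivAt (fun y : ℝ => RLpsi (y - u)) (RLd (y - u)) y := by
      simpa [Function.comp_def] using (RLpsi_deriv (y - u)).comp y ((hasDerivAt_id y).sub_const u)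
    exact hr.ofReal_comp.const_mul ((u:ℂ)^s)
  -- integration by parts
  have hG0 : ((0:ℝ):ℂ)^s = 0 := by
    rw [Complex.ofReal_zero, Complex.zero_cpow hs0]
  have hAint := hint (s - 1) (by simp; linarith) x
  have hBint := hintd x
  have hIBP : (∫ u in Ioi (0:ℝ), (u:ℂ)^s * ((RLd (x - u) : ℝ):ℂ)) =
      s * ∫ u in Ioi (0:ℝ), (u:ℂ)^(s-1) * ((RLpsi (x - u) : ℝ):ℂ) := by
    set G : ℝ → ℂ := fun u => (u:ℂ)^s * ((RLpsi (x - u) : ℝ):ℂ) with hGdef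
    set G' : ℝ → ℂ := fun u =>
      s * ((u:ℂ)^(s-1) * ((RLpsi (x - u) : ℝ):ℂ)) - (u:ℂ)^s * ((RLd (x - u) : ℝ):ℂ)
      with hG'def
    have hGderiv : ∀ u ∈ Ioi (0:ℝ), HasDerivAt G (G' u) u := by
      intro u hu
      have h1 := RLcpow_deriv hs0 (ne_of_gt hu)
      have h2 : HasDerivAt (fun v : ℝ => RLpsi (x - v)) (-RLd (x - u)) u := by
        simpa [Function.comp_def] using (RLpsi_deriv (x - u)).comp u ((hasDerivAt_id u).const_sub x)
      have := h1.mul h2.ofReal_comp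
      refine this.congr_deriv ?_
      simp [hG'def]
      push_cast
      ring
    have hGcont : ContinuousWithinAt G (Ici 0) 0 := by
      refine ContinuousAt.continuousWithinAt ?_
      exact (Complex.continuousAt_ofReal_cpow_const 0 s (Or.inl hs)).mul
        (Complex.continuous_ofReal.comp
          (RLpsi_cont.comp (continuous_const.sub continuous_id))).continuousAt
    have hGtop : Filter.Tendsto G Filter.atTop (nhds 0) := by
      refine squeeze_zero_norm' (a := fun u => Real.exp x * (u ^ s.re * Real.exp (-u))) ?_ ?_
      · filter_upwards [Filter.eventually_gt_atTop (0:ℝ)] with u hu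
        rw [norm_mul, RLnorm_cpow hu, Complex.norm_real, Real.norm_eq_abs,
          abs_of_nonneg (RLpsi_nonneg _)]
        have h1 : RLpsi (x - u) ≤ Real.exp x * Real.exp (-u) := by
          rw [← Real.exp_add]; simpa [sub_eq_add_neg] using RLpsi_le (x - u)
        calc u ^ s.re * RLpsi (x - u)
            ≤ u ^ s.re * (Real.exp x * Real.exp (-u)) :=
              mul_le_mul_of_nonneg_left h1 (Real.rpow_nonneg hu.le _)
          _ = Real.exp x * (u ^ s.re * Real.exp (-u)) := by ring
      · simpa using (RLtend s.re).const_mul (Real.exp x)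
    have hG'int : IntegrableOn G' (Ioi (0:ℝ)) := (hAint.const_mul s).sub hBint
    have := integral_Ioi_of_hasDerivAt_of_tendsto hGcont hGderiv hG'int hGtop
    have hG00 : G 0 = 0 := by simp [hGdef, Complex.zero_cpow hs0]
    rw [hG00, sub_zero] at this
    rw [hG'def] at this
    rw [integral_sub (hAint.const_mul s) hBint, integral_const_mul] at this
    exact (sub_eq_zero.mp this).symm
  -- final assembly
  have hGamma : Complex.Gamma (s + 1) = s * Complex.Gamma s :=
    Complex.Gamma_add_one s hs0
  have hGne : Complex.Gamma s ≠ 0 := Complex.Gamma_ne_zero_of_re_pos hs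
  simp only [hcov]
  have hd := key.2.const_mul (1 / Complex.Gamma (s + 1))
  refine hd.congr_deriv ?_
  rw [hIBP, hGamma]
  field_simp
end

section
/- Let s ∈ ℂ with Re(s) > 0 and s ≠ 1, and define the incomplete Riemann zeta function ζ(s, x) = (2^{s}/((2^{s}−2)·Γ(s))) ∫_{−∞}^{x} (x−t)^{s−1}/(e^{−t}+1) dt for x ≤ 0. Then for every x < 0, the function x ↦ ζ(s+1, x) is differentiable at x and ζ(s, x) = ((2^{s}−1)/(2^{s}−2)) · (∂/∂x) ζ(s+1, x). Here for u > 0 the complex power u^{w} means exp(w·log u). -/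
open MeasureTheory Set

/-- The incomplete Riemann zeta function
`ζ(s, x) = (2^s / ((2^s - 2) Γ(s))) ∫_{-∞}^x (x-t)^{s-1}/(exp (-t) + 1) dt`. -/
noncomputable def incompleteRiemannZeta (s : ℂ) (x : ℝ) : ℂ :=
  ((2 : ℂ) ^ s / (((2 : ℂ) ^ s - 2) * Complex.Gamma s)) *
    ∫ t in Set.Iic x, ((x - t : ℝ) : ℂ) ^ (s - 1) / ((Real.exp (-t) + 1 : ℝ) : ℂ)

section IrzAux

open Filter Topology

private lemma irz_shift (g : ℝ → ℂ) (y : ℝ) :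
    (∫ t in Iic y, g t) = ∫ u in Ioi (0:ℝ), g (y - u) := by
  have hmp : MeasurePreserving (fun u : ℝ => y - u) volume volume :=
    Measure.measurePreserving_sub_left volume y
  have hemb : MeasurableEmbedding (fun u : ℝ => y - u) :=
    (Homeomorph.subLeft y).measurableEmbedding
  have h := hmp.setIntegral_preimage_emb hemb g (Iic y)
  have hpre : (fun u : ℝ => y - u) ⁻¹' (Iic y) = Ici 0 := by
    ext u; simp [sub_le_iff_le_add]
  rw [hpre] at h
  rw [← h, integral_Ici_eq_integral_Ioi]

private lemma irz_sub (w : ℂ) (y : ℝ) :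
    (∫ t in Iic y, ((y - t : ℝ) : ℂ) ^ w / ((Real.exp (-t) + 1 : ℝ) : ℂ)) =
    ∫ u in Ioi (0:ℝ), ((u : ℝ) : ℂ) ^ w / ((Real.exp (u - y) + 1 : ℝ) : ℂ) := by
  rw [irz_shift (fun t => ((y - t : ℝ) : ℂ) ^ w / ((Real.exp (-t) + 1 : ℝ) : ℂ)) y]
  simp only [sub_sub_cancel, neg_sub]

private lemma irz_real_integrable (a c : ℝ) (ha : -1 < a) :
    IntegrableOn (fun u : ℝ => u ^ a * Real.exp (c - u)) (Ioi 0) volume := by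
  have ha1 : (0:ℝ) < a + 1 := by linarith
  have hg : IntegrableOn (fun u : ℝ => Real.exp (-u) * u ^ (a + 1 - 1)) (Ioi 0) volume :=
    Real.GammaIntegral_convergent ha1
  have h0 : IntegrableOn (fun u : ℝ => Real.exp c * (Real.exp (-u) * u ^ (a + 1 - 1)))
      (Ioi 0) volume := hg.const_mul (Real.exp c)
  refine h0.congr_fun (fun u hu => ?_) measurableSet_Ioi
  rw [add_sub_cancel_right, Real.exp_sub]
  beta_reduce
  rw [Real.exp_neg, div_eq_mul_inv]
  ring

private lemma irz_integrable_aux {φ : ℝ → ℂ}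
    (hm : AEStronglyMeasurable φ (volume.restrict (Ioi 0)))
    {a c : ℝ} (ha : -1 < a)
    (hb : ∀ u ∈ Ioi (0:ℝ), ‖φ u‖ ≤ u ^ a * Real.exp (c - u)) :
    IntegrableOn φ (Ioi 0) volume :=
  (irz_real_integrable a c ha).mono' hm
    ((ae_restrict_iff' measurableSet_Ioi).2 (Filter.Eventually.of_forall hb))

private lemma irz_deriv_y (u x : ℝ) : HasDerivAt (fun y : ℝ => ((Real.exp (u - y) + 1)⁻¹ : ℝ))
    (Real.exp (u - x) / (Real.exp (u - x) + 1) ^ 2) x := by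
  have h1 : HasDerivAt (fun y : ℝ => u - y) (-1) x := (hasDerivAt_id x).const_sub u
  have h4 := (h1.exp.add_const 1).fun_inv (by positivity)
  refine h4.congr_deriv ?_
  ring

private lemma irz_deriv_u (x u : ℝ) : HasDerivAt (fun v : ℝ => ((Real.exp (v - x) + 1)⁻¹ : ℝ))
    (-(Real.exp (u - x) / (Real.exp (u - x) + 1) ^ 2)) u := by
  have h1 : HasDerivAt (fun v : ℝ => v - x) 1 u := (hasDerivAt_id u).sub_const x
  have h4 := (h1.exp.add_const 1).fun_inv (by positivity)
  refine h4.congr_deriv ?_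
  ring

private lemma irz_deriv_cpow {s : ℂ} (hs0 : s ≠ 0) {u : ℝ} (hu : u ≠ 0) :
    HasDerivAt (fun v : ℝ => ((v : ℝ) : ℂ) ^ s) (s * ((u : ℝ) : ℂ) ^ (s - 1)) u := by
  have hne : s - 1 ≠ -1 := fun h => hs0 (by linear_combination h)
  have h := (hasDerivAt_ofReal_cpow_const' hu hne).const_mul s
  simp only [sub_add_cancel] at h
  have hfun : (fun y : ℝ => s * (((y : ℝ) : ℂ) ^ s / s)) = fun y : ℝ => ((y : ℝ) : ℂ) ^ s :=
    funext fun y => by field_simp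
  rwa [hfun] at h

private lemma irz_inv_le (x u : ℝ) : (Real.exp (u - x) + 1)⁻¹ ≤ Real.exp (x - u) := by
  have he : Real.exp (x - u) = (Real.exp (u - x))⁻¹ := by
    rw [← Real.exp_neg, neg_sub]
  rw [he]
  exact inv_anti₀ (Real.exp_pos _) (by linarith)

private lemma irz_frac_le (x u : ℝ) :
    Real.exp (u - x) / (Real.exp (u - x) + 1) ^ 2 ≤ Real.exp (x - u) := by
  have he : Real.exp (x - u) = (Real.exp (u - x))⁻¹ := by
    rw [← Real.exp_neg, neg_sub]
  have hp := Real.exp_pos (u - x)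
  rw [he, inv_eq_one_div, div_le_div_iff₀ (by positivity) hp]
  nlinarith

private lemma irz_norm_cpow {u : ℝ} (hu : 0 < u) (w : ℂ) : ‖((u : ℝ) : ℂ) ^ w‖ = u ^ w.re := by
  rw [Complex.norm_cpow_eq_rpow_re_of_pos hu]

private lemma irz_norm1 (w : ℂ) (x : ℝ) {u : ℝ} (hu : 0 < u) :
    ‖((u : ℝ) : ℂ) ^ w / ((Real.exp (u - x) + 1 : ℝ) : ℂ)‖ ≤ u ^ w.re * Real.exp (x - u) := by
  rw [norm_div, irz_norm_cpow hu, Complex.norm_real, Real.norm_eq_abs,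
    abs_of_pos (by positivity), div_eq_mul_inv]
  exact mul_le_mul_of_nonneg_left (irz_inv_le x u) (Real.rpow_nonneg hu.le _)

private lemma irz_norm2 (w : ℂ) (x : ℝ) {u : ℝ} (hu : 0 < u) :
    ‖((u : ℝ) : ℂ) ^ w * ((Real.exp (u - x) / (Real.exp (u - x) + 1) ^ 2 : ℝ) : ℂ)‖ ≤
      u ^ w.re * Real.exp (x - u) := by
  rw [norm_mul, irz_norm_cpow hu, Complex.norm_real, Real.norm_eq_abs,
    abs_of_pos (by positivity)]
  exact mul_le_mul_of_nonneg_left (irz_frac_le x u) (Real.rpow_nonneg hu.le _)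

private lemma irz_cont_cpow (w : ℂ) : ContinuousOn (fun u : ℝ => ((u : ℝ) : ℂ) ^ w) (Ioi 0) :=
  fun u hu => (Complex.continuousAt_ofReal_cpow_const u w (Or.inr (ne_of_gt hu))).continuousWithinAt

private lemma irz_meas1 (w : ℂ) (x : ℝ) :
    AEStronglyMeasurable (fun u : ℝ => ((u : ℝ) : ℂ) ^ w / ((Real.exp (u - x) + 1 : ℝ) : ℂ))
      (volume.restrict (Ioi 0)) := by
  refine ContinuousOn.aestronglyMeasurable ?_ measurableSet_Ioi
  refine (irz_cont_cpow w).div (Continuous.continuousOn (by fun_prop)) fun u _ => ?_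
  exact_mod_cast Complex.ofReal_ne_zero.mpr (by positivity)

private lemma irz_meas2 (w : ℂ) (x : ℝ) :
    AEStronglyMeasurable
      (fun u : ℝ => ((u : ℝ) : ℂ) ^ w * ((Real.exp (u - x) / (Real.exp (u - x) + 1) ^ 2 : ℝ) : ℂ))
      (volume.restrict (Ioi 0)) := by
  refine ContinuousOn.aestronglyMeasurable ?_ measurableSet_Ioi
  refine (irz_cont_cpow w).mul (Continuous.continuousOn ?_)
  have h : Continuous fun u : ℝ => (Real.exp (u - x) / (Real.exp (u - x) + 1) ^ 2 : ℝ) := by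
    apply Continuous.div (by fun_prop) (by fun_prop)
    intro u; positivity
  fun_prop

private lemma irz_int1 (w : ℂ) (hw : -1 < w.re) (x : ℝ) :
    IntegrableOn (fun u : ℝ => ((u : ℝ) : ℂ) ^ w / ((Real.exp (u - x) + 1 : ℝ) : ℂ))
      (Ioi 0) volume :=
  irz_integrable_aux (irz_meas1 w x) hw (fun u hu => irz_norm1 w x hu)

private lemma irz_int2 (w : ℂ) (hw : -1 < w.re) (x : ℝ) :
    IntegrableOn
      (fun u : ℝ => ((u : ℝ) : ℂ) ^ w * ((Real.exp (u - x) / (Real.exp (u - x) + 1) ^ 2 : ℝ) : ℂ))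
      (Ioi 0) volume :=
  irz_integrable_aux (irz_meas2 w x) hw (fun u hu => irz_norm2 w x hu)

private lemma irz_hasDeriv (s : ℂ) (hs : 0 < s.re) (x : ℝ) :
    HasDerivAt (fun y : ℝ => ∫ u in Ioi (0:ℝ), ((u : ℝ) : ℂ) ^ s / ((Real.exp (u - y) + 1 : ℝ) : ℂ))
      (∫ u in Ioi (0:ℝ),
        ((u : ℝ) : ℂ) ^ s * ((Real.exp (u - x) / (Real.exp (u - x) + 1) ^ 2 : ℝ) : ℂ)) x := by
  have hw : -1 < s.re := by linarith
  have h := hasDerivAt_integral_of_dominated_loc_of_deriv_le (μ := volume.restrict (Ioi 0))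
    (F := fun (y : ℝ) (u : ℝ) => ((u : ℝ) : ℂ) ^ s / ((Real.exp (u - y) + 1 : ℝ) : ℂ))
    (F' := fun (y : ℝ) (u : ℝ) =>
      ((u : ℝ) : ℂ) ^ s * ((Real.exp (u - y) / (Real.exp (u - y) + 1) ^ 2 : ℝ) : ℂ))
    (bound := fun u : ℝ => u ^ s.re * Real.exp ((x + 1) - u))
    (Metric.ball_mem_nhds x one_pos)
    (Eventually.of_forall fun y => irz_meas1 s y)
    (irz_int1 s hw x)
    (irz_meas2 s x)
    ?_ (irz_real_integrable s.re (x + 1) hw) ?_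
  · exact h.2
  · refine (ae_restrict_iff' measurableSet_Ioi).2 (Eventually.of_forall fun u hu => ?_)
    intro y hy
    refine (irz_norm2 s y hu).trans ?_
    refine mul_le_mul_of_nonneg_left (Real.exp_le_exp.2 ?_) (Real.rpow_nonneg (le_of_lt hu) _)
    rw [Metric.mem_ball, Real.dist_eq, abs_sub_lt_iff] at hy
    linarith [hy.1]
  · refine (ae_restrict_iff' measurableSet_Ioi).2 (Eventually.of_forall fun u hu => ?_)
    intro y _
    have h2 := ((irz_deriv_y u y).ofReal_comp).const_mul (((u : ℝ) : ℂ) ^ s)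
    simpa only [div_eq_mul_inv, Complex.ofReal_inv] using h2

private lemma irz_parts (s : ℂ) (hs : 0 < s.re) (x : ℝ) :
    (∫ u in Ioi (0:ℝ),
        ((u : ℝ) : ℂ) ^ s * ((Real.exp (u - x) / (Real.exp (u - x) + 1) ^ 2 : ℝ) : ℂ))
      = s * ∫ u in Ioi (0:ℝ), ((u : ℝ) : ℂ) ^ (s - 1) / ((Real.exp (u - x) + 1 : ℝ) : ℂ) := by
  have hs0 : s ≠ 0 := by intro h; rw [h] at hs; simp at hs
  set g : ℝ → ℂ := fun u => ((u : ℝ) : ℂ) ^ s / ((Real.exp (u - x) + 1 : ℝ) : ℂ) with hgdef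
  set G : ℝ → ℂ := fun u =>
    s * (((u : ℝ) : ℂ) ^ (s - 1) / ((Real.exp (u - x) + 1 : ℝ) : ℂ))
      - ((u : ℝ) : ℂ) ^ s * ((Real.exp (u - x) / (Real.exp (u - x) + 1) ^ 2 : ℝ) : ℂ) with hGdef
  have hderiv : ∀ u ∈ Ioi (0:ℝ), HasDerivAt g (G u) u := by
    intro u hu
    have h1 := irz_deriv_cpow hs0 (ne_of_gt hu)
    have h2 := (irz_deriv_u x u).ofReal_comp
    have h := h1.mul h2
    have hfun : g = fun v : ℝ => ((v : ℝ) : ℂ) ^ s * (((Real.exp (v - x) + 1)⁻¹ : ℝ) : ℂ) := by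
      funext v
      simp [hgdef, div_eq_mul_inv, Complex.ofReal_inv]
    rw [hfun]
    refine h.congr_deriv ?_
    simp only [hGdef, div_eq_mul_inv, Complex.ofReal_inv, Complex.ofReal_neg, Complex.ofReal_mul]
    ring
  have hcont : ContinuousWithinAt g (Ici 0) 0 := by
    refine ContinuousAt.continuousWithinAt ?_
    refine ContinuousAt.div (Complex.continuousAt_ofReal_cpow_const 0 s (Or.inl hs))
      (by fun_prop) ?_
    exact_mod_cast Complex.ofReal_ne_zero.mpr (by positivity)
  have hint1 : IntegrableOn
      (fun u : ℝ => ((u : ℝ) : ℂ) ^ (s - 1) / ((Real.exp (u - x) + 1 : ℝ) : ℂ)) (Ioi 0) volume :=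
    irz_int1 (s - 1) (by simp [Complex.sub_re]; linarith) x
  have hint1' : IntegrableOn
      (fun u : ℝ => s * (((u : ℝ) : ℂ) ^ (s - 1) / ((Real.exp (u - x) + 1 : ℝ) : ℂ)))
      (Ioi 0) volume := hint1.const_mul s
  have hint2 := irz_int2 s (by linarith) x
  have hGint : IntegrableOn G (Ioi 0) volume := hint1'.sub hint2
  have htop : Filter.Tendsto g atTop (nhds 0) := by
    have hb : ∀ᶠ u in atTop, ‖g u‖ ≤ Real.exp x * (u ^ s.re * Real.exp (-1 * u)) := by
      filter_upwards [eventually_gt_atTop (0:ℝ)] with u hu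
      refine (irz_norm1 s x hu).trans (le_of_eq ?_)
      rw [Real.exp_sub, neg_one_mul, Real.exp_neg]
      ring
    have ht := (tendsto_rpow_mul_exp_neg_mul_atTop_nhds_zero s.re 1 one_pos).const_mul
      (Real.exp x)
    rw [mul_zero] at ht
    exact squeeze_zero_norm' hb (by simpa [neg_one_mul] using ht)
  have key := integral_Ioi_of_hasDerivAt_of_tendsto hcont hderiv hGint htop
  have hg0 : g 0 = 0 := by
    simp [hgdef, Complex.ofReal_zero, Complex.zero_cpow hs0]
  rw [hg0, zero_sub, neg_zero] at key
  have hsplit : (∫ u in Ioi (0:ℝ), G u)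
      = s * (∫ u in Ioi (0:ℝ), ((u : ℝ) : ℂ) ^ (s - 1) / ((Real.exp (u - x) + 1 : ℝ) : ℂ))
        - ∫ u in Ioi (0:ℝ),
            ((u : ℝ) : ℂ) ^ s * ((Real.exp (u - x) / (Real.exp (u - x) + 1) ^ 2 : ℝ) : ℂ) := by
    rw [hGdef]
    rw [integral_sub hint1' hint2, integral_const_mul]
  rw [hsplit] at key
  linear_combination -key

end IrzAux

/-- Recursive functional relationship of the incomplete Riemann zeta function through
differentiation: for `Re s > 0`, `s ≠ 1` and `x < 0`, `x ↦ ζ(s+1, x)` is differentiable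
at `x` and `ζ(s, x) = ((2^s - 1)/(2^s - 2)) ∂ₓ ζ(s+1, x)`. -/
theorem incompleteRiemannZeta_eq_deriv_succ
    (s : ℂ) (hs : 0 < s.re) (hs1 : s ≠ 1) (x : ℝ) (hx : x < 0) :
    DifferentiableAt ℝ (fun y : ℝ => incompleteRiemannZeta (s + 1) y) x ∧
    incompleteRiemannZeta s x =
      (((2 : ℂ) ^ s - 1) / ((2 : ℂ) ^ s - 2)) *
        deriv (fun y : ℝ => incompleteRiemannZeta (s + 1) y) x := by
  have hs0 : s ≠ 0 := by intro h; rw [h] at hs; simp at hs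
  set C : ℂ := (2 : ℂ) ^ (s + 1) / (((2 : ℂ) ^ (s + 1) - 2) * Complex.Gamma (s + 1)) with hC
  have hfun : (fun y : ℝ => incompleteRiemannZeta (s + 1) y)
      = fun y : ℝ => C * ∫ u in Ioi (0:ℝ), ((u : ℝ) : ℂ) ^ s / ((Real.exp (u - y) + 1 : ℝ) : ℂ) := by
    funext y
    rw [incompleteRiemannZeta, irz_sub, add_sub_cancel_right]
  have hD := (irz_hasDeriv s hs x).const_mul C
  rw [← hfun] at hD
  refine ⟨hD.differentiableAt, ?_⟩
  rw [hD.deriv]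
  rw [irz_parts s hs x]
  have hzeta : incompleteRiemannZeta s x
      = ((2 : ℂ) ^ s / (((2 : ℂ) ^ s - 2) * Complex.Gamma s)) *
        ∫ u in Ioi (0:ℝ), ((u : ℝ) : ℂ) ^ (s - 1) / ((Real.exp (u - x) + 1 : ℝ) : ℂ) := by
    rw [incompleteRiemannZeta, irz_sub]
  rw [hzeta, hC]
  set J : ℂ := ∫ u in Ioi (0:ℝ), ((u : ℝ) : ℂ) ^ (s - 1) / ((Real.exp (u - x) + 1 : ℝ) : ℂ)
  have h2 : (2 : ℂ) ^ (s + 1) = 2 * (2 : ℂ) ^ s := by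
    rw [Complex.cpow_add _ _ (two_ne_zero), Complex.cpow_one]; ring
  have hGamma : Complex.Gamma (s + 1) = s * Complex.Gamma s := Complex.Gamma_add_one s hs0
  rw [h2, hGamma]
  by_cases hcase : (2 : ℂ) ^ s - 2 = 0
  · rw [hcase]
    simp
  · have habs : ‖(2:ℂ) ^ s‖ = (2:ℝ) ^ s.re := by
      have : ((2:ℝ) : ℂ) = (2 : ℂ) := by norm_num
      rw [← this, Complex.norm_cpow_eq_rpow_re_of_pos two_pos]
    have h1ne : (2 : ℂ) ^ s - 1 ≠ 0 := by
      intro h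
      have h21 : (2:ℂ) ^ s = 1 := by linear_combination h
      rw [h21] at habs
      simp only [norm_one] at habs
      have hlt : (1:ℝ) < 2 ^ s.re :=
        (Real.one_lt_rpow_iff_of_pos two_pos).2 (Or.inl ⟨one_lt_two, hs⟩)
      linarith [habs, hlt]
    have hG : Complex.Gamma s ≠ 0 := Complex.Gamma_ne_zero_of_re_pos hs
    have h22 : 2 * (2:ℂ) ^ s - 2 ≠ 0 := by
      have : 2 * (2:ℂ) ^ s - 2 = 2 * ((2:ℂ) ^ s - 1) := by ring
      rw [this]
      exact mul_ne_zero two_ne_zero h1ne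
    field_simp
end

section
/- For every s ∈ ℂ with Re(s) > 0 and s ≠ 1, the partial sums of the Dirichlet eta series converge to (1−2^{1−s})·ζ(s); that is, lim_{N→∞} ∑_{n=1}^{N} (−1)^{n−1}/n^{s} = (1 − 2^{1−s}) · ζ(s), where ζ denotes the analytically continued Riemann zeta function. Equivalently, ζ(s) = (2^{s}/(2^{s}−2)) · lim_{N→∞} ∑_{n=1}^{N} (−1)^{n−1}/n^{s}. -/
open Filter Complex Set
namespace EtaLandau

noncomputable def g (k : ℕ) (z : ℂ) : ℂ :=
  ((2 * k + 1 : ℕ) : ℂ) ^ (-z) - ((2 * k + 2 : ℕ) : ℂ) ^ (-z)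

lemma cpow_mvt {z : ℂ} (hz : 0 < z.re) {a b : ℝ} (ha : 0 < a) (hab : a ≤ b) :
    ‖(b : ℂ) ^ (-z) - (a : ℂ) ^ (-z)‖ ≤ ‖z‖ * a ^ (-z.re - 1) * (b - a) := by
  have hz0 : z ≠ 0 := fun h => by simp [h] at hz
  have key := norm_image_sub_le_of_norm_deriv_le_segment'
    (f := fun y : ℝ => (y : ℂ) ^ (-z)) (f' := fun x : ℝ => (-z) * (x : ℂ) ^ (-z - 1))
    (a := a) (b := b) (C := ‖z‖ * a ^ (-z.re - 1)) ?_ ?_ b (right_mem_Icc.2 hab)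
  · simpa using key
  · intro x hx
    have hx0 : 0 < x := lt_of_lt_of_le ha hx.1
    have hr : (-z - 1 : ℂ) ≠ -1 := by
      intro h
      exact hz0 (by linear_combination -h)
    have h0 := hasDerivAt_ofReal_cpow_const' hx0.ne' hr
    have h0' : HasDerivAt (fun y : ℝ => (y : ℂ) ^ (-z) / (-z)) ((x : ℂ) ^ (-z - 1)) x := by
      simpa [sub_add_cancel] using h0
    have h1 := h0'.const_mul (-z)
    have h2 : (fun y : ℝ => (-z) * ((y : ℂ) ^ (-z) / (-z))) = fun y : ℝ => (y : ℂ) ^ (-z) := by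
      funext y
      rw [mul_comm, div_mul_cancel₀ _ (neg_ne_zero.2 hz0)]
    rw [h2] at h1
    exact h1.hasDerivWithinAt
  · intro x hx
    have hx0 : 0 < x := lt_of_lt_of_le ha hx.1
    rw [norm_mul, norm_neg]
    have hn : ‖(x : ℂ) ^ (-z - 1)‖ = x ^ (-z.re - 1) := by
      rw [Complex.norm_cpow_eq_rpow_re_of_pos hx0]
      norm_num
    rw [hn]
    have : x ^ (-z.re - 1) ≤ a ^ (-z.re - 1) :=
      Real.rpow_le_rpow_of_nonpos ha hx.1 (by linarith)
    exact mul_le_mul_of_nonneg_left this (norm_nonneg _)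

lemma norm_g_le {z : ℂ} (hz : 0 < z.re) (k : ℕ) :
    ‖g k z‖ ≤ ‖z‖ * (2 * (k : ℝ) + 1) ^ (-z.re - 1) := by
  have h := cpow_mvt hz (a := 2 * (k : ℝ) + 1) (b := 2 * (k : ℝ) + 2) (by positivity)
    (by linarith)
  have e1 : ((2 * (k : ℝ) + 1 : ℝ) : ℂ) = ((2 * k + 1 : ℕ) : ℂ) := by push_cast; ring
  have e2 : ((2 * (k : ℝ) + 2 : ℝ) : ℂ) = ((2 * k + 2 : ℕ) : ℂ) := by push_cast; ring
  rw [e1, e2] at h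
  rw [show (2 * (k : ℝ) + 2) - (2 * (k : ℝ) + 1) = 1 from by ring, mul_one] at h
  rw [g, norm_sub_rev]
  exact h

lemma summable_g {z : ℂ} (hz : 0 < z.re) : Summable (fun k => g k z) := by
  have hbase : Summable (fun k : ℕ => ((k : ℝ) + 1) ^ (-z.re - 1)) := by
    have h1 : Summable (fun n : ℕ => (n : ℝ) ^ (-z.re - 1)) :=
      Real.summable_nat_rpow.2 (by linarith)
    have h2 := (summable_nat_add_iff 1).2 h1
    refine h2.congr fun n => ?_
    push_cast
    ring_nf
  apply Summable.of_norm
  apply Summable.of_nonneg_of_le (fun k => norm_nonneg _)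
    (fun k => (norm_g_le hz k).trans ?_) (hbase.mul_left ‖z‖)
  have : ((k : ℝ) + 1) ^ (-z.re - 1) ≥ (2 * (k : ℝ) + 1) ^ (-z.re - 1) :=
    Real.rpow_le_rpow_of_nonpos (by positivity) (by linarith) (by linarith)
  exact mul_le_mul_of_nonneg_left this (norm_nonneg _)

noncomputable def T (z : ℂ) : ℂ := ∑' k, g k z

lemma sum_eta_even (z : ℂ) (N : ℕ) :
    ∑ n ∈ Finset.range (2 * N), (-1 : ℂ) ^ n / ((n : ℂ) + 1) ^ z
      = ∑ k ∈ Finset.range N, g k z := by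
  induction N with
  | zero => simp
  | succ N ih =>
    rw [show 2 * (N + 1) = 2 * N + 1 + 1 by ring, Finset.sum_range_succ,
      Finset.sum_range_succ, ih, Finset.sum_range_succ]
    have e1 : (-1 : ℂ) ^ (2 * N) = 1 := by
      rw [pow_mul]; norm_num
    have e2 : (-1 : ℂ) ^ (2 * N + 1) = -1 := by
      rw [pow_succ, e1, one_mul]
    have b1 : ((2 * N + 1 : ℕ) : ℂ) = ((2 * N : ℕ) : ℂ) + 1 := by push_cast; ring
    have b2 : ((2 * N + 2 : ℕ) : ℂ) = ((2 * N + 1 : ℕ) : ℂ) + 1 := by push_cast; ring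
    rw [e1, e2, g, cpow_neg, cpow_neg, b1, b2]
    push_cast
    ring

lemma term_tendsto {z : ℂ} (hz : 0 < z.re) :
    Tendsto (fun n : ℕ => (-1 : ℂ) ^ n / ((n : ℂ) + 1) ^ z) atTop (nhds 0) := by
  rw [tendsto_zero_iff_norm_tendsto_zero]
  have h : ∀ n : ℕ, ‖(-1 : ℂ) ^ n / ((n : ℂ) + 1) ^ z‖ = ((n : ℝ) + 1) ^ (-z.re) := by
    intro n
    rw [norm_div, norm_pow, norm_neg, norm_one, one_pow]
    have e : ((n : ℂ) + 1) = (((n : ℝ) + 1 : ℝ) : ℂ) := by push_cast; ring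
    rw [e, Complex.norm_cpow_eq_rpow_re_of_pos (by positivity),
      ]
    rw [Real.rpow_neg (by positivity : (0:ℝ) ≤ (n:ℝ) + 1), one_div]
  simp_rw [h]
  exact (tendsto_rpow_neg_atTop hz).comp
    (tendsto_atTop_add_const_right atTop 1 tendsto_natCast_atTop_atTop)

end EtaLandau

namespace EtaLandau

lemma tendsto_eta {z : ℂ} (hz : 0 < z.re) :
    Tendsto (fun N : ℕ => ∑ n ∈ Finset.range N, (-1 : ℂ) ^ n / ((n : ℂ) + 1) ^ z)
      atTop (nhds (T z)) := by
  set f := fun N : ℕ => ∑ n ∈ Finset.range N, (-1 : ℂ) ^ n / ((n : ℂ) + 1) ^ z with hf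
  have he : Tendsto (fun N => f (2 * N)) atTop (nhds (T z)) := by
    have := (summable_g hz).hasSum.tendsto_sum_nat
    refine this.congr fun N => ?_
    rw [hf]
    exact (sum_eta_even z N).symm
  have ho : Tendsto (fun N => f (2 * N + 1)) atTop (nhds (T z)) := by
    have : ∀ N, f (2 * N + 1) = f (2 * N) + (-1 : ℂ) ^ (2 * N) / (((2 * N : ℕ) : ℂ) + 1) ^ z := by
      intro N
      rw [hf]
      exact Finset.sum_range_succ _ _
    simp_rw [this]
    have ht : Tendsto (fun N : ℕ => (-1 : ℂ) ^ (2 * N) / (((2 * N : ℕ) : ℂ) + 1) ^ z)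
        atTop (nhds 0) := by
      refine (term_tendsto hz).comp (?_ : Tendsto (fun N : ℕ => 2 * N) atTop atTop)
      exact tendsto_atTop_mono (fun n => by simp; omega) tendsto_id
    simpa using he.add ht
  rw [Metric.tendsto_atTop] at he ho ⊢
  intro ε hε
  obtain ⟨N₁, h1⟩ := he ε hε
  obtain ⟨N₂, h2⟩ := ho ε hε
  refine ⟨2 * (N₁ + N₂) + 2, fun n hn => ?_⟩
  rcases Nat.even_or_odd n with ⟨m, hm⟩ | ⟨m, hm⟩
  · rw [show n = 2 * m from by omega]
    exact h1 m (by omega)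
  · rw [hm]
    exact h2 m (by omega)

lemma T_eq_of_one_lt {z : ℂ} (hz : 1 < z.re) :
    T z = (1 - (2 : ℂ) ^ (1 - z)) * riemannZeta z := by
  have hz0 : 0 < z.re := lt_trans one_pos hz
  have hsum : Summable (fun n : ℕ => ((n + 1 : ℕ) : ℂ) ^ (-z)) := by
    have h0 := Complex.summable_one_div_nat_cpow.2 hz
    have h1 := (summable_nat_add_iff 1).2 h0
    refine h1.congr fun n => ?_
    rw [cpow_neg, one_div]
  have hStend : Tendsto (fun N : ℕ => ∑ n ∈ Finset.range N, ((n + 1 : ℕ) : ℂ) ^ (-z))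
      atTop (nhds (riemannZeta z)) := by
    have h := hsum.hasSum.tendsto_sum_nat
    have : ∑' n : ℕ, ((n + 1 : ℕ) : ℂ) ^ (-z) = riemannZeta z := by
      rw [zeta_eq_tsum_one_div_nat_add_one_cpow hz]
      refine tsum_congr fun n => ?_
      rw [cpow_neg, one_div]
      push_cast
      ring_nf
    rwa [this] at h
  have h21 : (2 : ℂ) ^ (1 - z) = 2 * (2 : ℂ) ^ (-z) := by
    rw [show (1 - z : ℂ) = 1 + -z from by ring, cpow_add _ _ two_ne_zero, cpow_one]
  have hkey : ∀ N : ℕ, ∑ k ∈ Finset.range N, g k z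
      = ∑ n ∈ Finset.range (2 * N), ((n + 1 : ℕ) : ℂ) ^ (-z)
        - (2 : ℂ) ^ (1 - z) * ∑ n ∈ Finset.range N, ((n + 1 : ℕ) : ℂ) ^ (-z) := by
    intro N
    induction N with
    | zero => simp
    | succ N ih =>
      rw [Finset.sum_range_succ, ih, show 2 * (N + 1) = 2 * N + 1 + 1 from by ring,
        Finset.sum_range_succ, Finset.sum_range_succ, Finset.sum_range_succ]
      have hsplit : ((2 * N + 1 + 1 : ℕ) : ℂ) ^ (-z) = (2 : ℂ) ^ (-z) * ((N + 1 : ℕ) : ℂ) ^ (-z) := by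
        have h2 : ((2 * N + 1 + 1 : ℕ) : ℂ) = ((2 : ℕ) : ℂ) * ((N + 1 : ℕ) : ℂ) := by
          push_cast; ring
        rw [h2, natCast_mul_natCast_cpow]
        norm_num
      have hb : ((2 * N + 1 : ℕ) : ℂ) = ((2 * N : ℕ) + 1 : ℂ) := by push_cast; ring
      rw [g, hsplit, h21, hb]
      push_cast
      ring
  have h1 : Tendsto (fun N => ∑ k ∈ Finset.range N, g k z) atTop
      (nhds (riemannZeta z - (2 : ℂ) ^ (1 - z) * riemannZeta z)) := by
    simp_rw [hkey]
    have hdouble : Tendsto (fun N : ℕ => 2 * N) atTop atTop :=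
      tendsto_atTop_mono (fun n => by simp; omega) tendsto_id
    exact (hStend.comp hdouble).sub (hStend.const_mul _)
  have h2 := (summable_g hz0).hasSum.tendsto_sum_nat
  have := tendsto_nhds_unique h2 h1
  rw [T, this]
  ring

end EtaLandau

namespace EtaLandau

noncomputable def g' (k : ℕ) (z : ℂ) : ℂ :=
  ((2 * k + 2 : ℕ) : ℂ) ^ (-z) * Complex.log ((2 * k + 2 : ℕ) : ℂ)
    - ((2 * k + 1 : ℕ) : ℂ) ^ (-z) * Complex.log ((2 * k + 1 : ℕ) : ℂ)

lemma hasDerivAt_g (k : ℕ) (z : ℂ) : HasDerivAt (g k) (g' k z) z := by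
  have c1 : ((2 * k + 1 : ℕ) : ℂ) ≠ 0 := Nat.cast_ne_zero.2 (by omega)
  have c2 : ((2 * k + 2 : ℕ) : ℂ) ≠ 0 := Nat.cast_ne_zero.2 (by omega)
  have h1 : HasDerivAt (fun z : ℂ => ((2 * k + 1 : ℕ) : ℂ) ^ (-z))
      (((2 * k + 1 : ℕ) : ℂ) ^ (-z) * Complex.log ((2 * k + 1 : ℕ) : ℂ) * (-1)) z :=
    (hasDerivAt_neg z).const_cpow (Or.inl c1)
  have h2 : HasDerivAt (fun z : ℂ => ((2 * k + 2 : ℕ) : ℂ) ^ (-z))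
      (((2 * k + 2 : ℕ) : ℂ) ^ (-z) * Complex.log ((2 * k + 2 : ℕ) : ℂ) * (-1)) z :=
    (hasDerivAt_neg z).const_cpow (Or.inl c2)
  have h := h1.sub h2
  refine h.congr_deriv ?_
  rw [g']
  ring

lemma norm_g'_le {z : ℂ} (hz : 0 < z.re) (k : ℕ) :
    ‖g' k z‖ ≤ (‖z‖ * Real.log (2 * (k : ℝ) + 2) + 1) * (2 * (k : ℝ) + 1) ^ (-z.re - 1) := by
  have hk1 : (1 : ℝ) ≤ 2 * (k : ℝ) + 1 := by
    have := Nat.cast_nonneg (α := ℝ) k; linarith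
  have hk1' : (0 : ℝ) < 2 * (k : ℝ) + 1 := by positivity
  have e1 : ((2 * (k : ℝ) + 1 : ℝ) : ℂ) = ((2 * k + 1 : ℕ) : ℂ) := by push_cast; ring
  have e2 : ((2 * (k : ℝ) + 2 : ℝ) : ℂ) = ((2 * k + 2 : ℕ) : ℂ) := by push_cast; ring
  have er1 : ((2 * k + 1 : ℕ) : ℝ) = 2 * (k : ℝ) + 1 := by push_cast; ring
  have er2 : ((2 * k + 2 : ℕ) : ℝ) = 2 * (k : ℝ) + 2 := by push_cast; ring
  have hd : g' k z
      = Complex.log ((2 * k + 2 : ℕ) : ℂ)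
          * (((2 * k + 2 : ℕ) : ℂ) ^ (-z) - ((2 * k + 1 : ℕ) : ℂ) ^ (-z))
        + (Complex.log ((2 * k + 2 : ℕ) : ℂ) - Complex.log ((2 * k + 1 : ℕ) : ℂ))
          * ((2 * k + 1 : ℕ) : ℂ) ^ (-z) := by
    rw [g']; ring
  have hlog2 : ‖Complex.log ((2 * k + 2 : ℕ) : ℂ)‖ = Real.log (2 * (k : ℝ) + 2) := by
    rw [← Complex.natCast_log, Complex.norm_real, Real.norm_eq_abs, _root_.abs_of_nonneg
      (Real.log_nonneg (by rw [er2]; linarith)), er2]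
  have hmvt : ‖((2 * k + 2 : ℕ) : ℂ) ^ (-z) - ((2 * k + 1 : ℕ) : ℂ) ^ (-z)‖
      ≤ ‖z‖ * (2 * (k : ℝ) + 1) ^ (-z.re - 1) := by
    have h := cpow_mvt hz (a := 2 * (k : ℝ) + 1) (b := 2 * (k : ℝ) + 2) hk1' (by linarith)
    rw [e1, e2, show (2 * (k : ℝ) + 2) - (2 * (k : ℝ) + 1) = 1 from by ring, mul_one] at h
    exact h
  have hlogdiff : ‖Complex.log ((2 * k + 2 : ℕ) : ℂ) - Complex.log ((2 * k + 1 : ℕ) : ℂ)‖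
      ≤ (2 * (k : ℝ) + 1)⁻¹ := by
    rw [← Complex.natCast_log, ← Complex.natCast_log, ← Complex.ofReal_sub,
      Complex.norm_real, Real.norm_eq_abs, er1, er2]
    have hmono : Real.log (2 * (k : ℝ) + 1) ≤ Real.log (2 * (k : ℝ) + 2) :=
      Real.log_le_log (by positivity) (by linarith)
    rw [_root_.abs_of_nonneg (by linarith)]
    rw [← Real.log_div (by positivity) (by positivity)]
    have := Real.log_le_sub_one_of_pos
      (show (0:ℝ) < (2 * (k : ℝ) + 2) / (2 * (k : ℝ) + 1) from by positivity)
    have heq : (2 * (k : ℝ) + 2) / (2 * (k : ℝ) + 1) - 1 = (2 * (k : ℝ) + 1)⁻¹ := by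
      field_simp
      ring
    linarith [heq ▸ this]
  have hnorm1 : ‖((2 * k + 1 : ℕ) : ℂ) ^ (-z)‖ = (2 * (k : ℝ) + 1) ^ (-z.re) := by
    rw [← e1, Complex.norm_cpow_eq_rpow_re_of_pos hk1']
    norm_num
  have hA : (2 * (k : ℝ) + 1) ^ (-z.re - 1)
      = (2 * (k : ℝ) + 1) ^ (-z.re) * (2 * (k : ℝ) + 1)⁻¹ := by
    rw [← Real.rpow_neg_one (2 * (k : ℝ) + 1), ← Real.rpow_add hk1']
    ring_nf
  calc ‖g' k z‖ ≤ ‖Complex.log ((2 * k + 2 : ℕ) : ℂ)‖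
        * ‖((2 * k + 2 : ℕ) : ℂ) ^ (-z) - ((2 * k + 1 : ℕ) : ℂ) ^ (-z)‖
      + ‖Complex.log ((2 * k + 2 : ℕ) : ℂ) - Complex.log ((2 * k + 1 : ℕ) : ℂ)‖
        * ‖((2 * k + 1 : ℕ) : ℂ) ^ (-z)‖ := by
        rw [hd]
        exact (norm_add_le _ _).trans (by rw [norm_mul, norm_mul])
    _ ≤ Real.log (2 * (k : ℝ) + 2) * (‖z‖ * (2 * (k : ℝ) + 1) ^ (-z.re - 1))
        + (2 * (k : ℝ) + 1)⁻¹ * (2 * (k : ℝ) + 1) ^ (-z.re) := by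
        rw [hlog2, hnorm1]
        have hln : 0 ≤ Real.log (2 * (k : ℝ) + 2) := Real.log_nonneg (by linarith)
        gcongr
    _ = (‖z‖ * Real.log (2 * (k : ℝ) + 2) + 1) * (2 * (k : ℝ) + 1) ^ (-z.re - 1) := by
        rw [hA]; ring

end EtaLandau

namespace EtaLandau

lemma summable_shift (p : ℝ) (hp : p < -1) :
    Summable (fun k : ℕ => ((k : ℝ) + 1) ^ p) := by
  have h1 : Summable (fun n : ℕ => (n : ℝ) ^ p) := Real.summable_nat_rpow.2 hp
  have h2 := (summable_nat_add_iff 1).2 h1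
  refine h2.congr fun n => ?_
  push_cast
  ring_nf

lemma summable_bound {ε B : ℝ} (hε : 0 < ε) (hB : 0 ≤ B) :
    Summable (fun k : ℕ => (B * Real.log (2 * (k : ℝ) + 2) + 1) * ((k : ℝ) + 1) ^ (-1 - ε)) := by
  have hC : 0 ≤ B * 2 ^ (ε / 2) / (ε / 2) := by positivity
  refine Summable.of_nonneg_of_le (fun k => ?_) (fun k => ?_)
    ((summable_shift (-1 - ε / 2) (by linarith)).mul_left (B * 2 ^ (ε / 2) / (ε / 2) + 1))
  · have hl : 0 ≤ Real.log (2 * (k : ℝ) + 2) := Real.log_nonneg (by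
      have := Nat.cast_nonneg (α := ℝ) k; linarith)
    have : 0 ≤ ((k : ℝ) + 1) ^ (-1 - ε) := Real.rpow_nonneg (by positivity) _
    nlinarith [mul_nonneg hB hl]
  · have hk0 : (0 : ℝ) ≤ (k : ℝ) := Nat.cast_nonneg k
    have hk1 : (1 : ℝ) ≤ (k : ℝ) + 1 := by linarith
    have h1 : Real.log (2 * (k : ℝ) + 2) ≤ 2 ^ (ε / 2) * ((k : ℝ) + 1) ^ (ε / 2) / (ε / 2) := by
      have hlog := Real.log_le_rpow_div (x := 2 * (k : ℝ) + 2) (by positivity) (half_pos hε)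
      have h2 : (2 * (k : ℝ) + 2) ^ (ε / 2) = 2 ^ (ε / 2) * ((k : ℝ) + 1) ^ (ε / 2) := by
        rw [show 2 * (k : ℝ) + 2 = 2 * ((k : ℝ) + 1) from by ring,
          Real.mul_rpow (by norm_num) (by positivity)]
      rw [h2] at hlog
      exact hlog
    have hX : 0 ≤ ((k : ℝ) + 1) ^ (-1 - ε) := Real.rpow_nonneg (by positivity) _
    calc (B * Real.log (2 * (k : ℝ) + 2) + 1) * ((k : ℝ) + 1) ^ (-1 - ε)
        ≤ (B * (2 ^ (ε / 2) * ((k : ℝ) + 1) ^ (ε / 2) / (ε / 2)) + 1) * ((k : ℝ) + 1) ^ (-1 - ε) := by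
          gcongr
      _ = B * 2 ^ (ε / 2) / (ε / 2) * (((k : ℝ) + 1) ^ (ε / 2) * ((k : ℝ) + 1) ^ (-1 - ε))
          + ((k : ℝ) + 1) ^ (-1 - ε) := by ring
      _ = B * 2 ^ (ε / 2) / (ε / 2) * ((k : ℝ) + 1) ^ (-1 - ε / 2) + ((k : ℝ) + 1) ^ (-1 - ε) := by
          rw [← Real.rpow_add (by positivity), show ε / 2 + (-1 - ε) = -1 - ε / 2 from by ring]
      _ ≤ (B * 2 ^ (ε / 2) / (ε / 2) + 1) * ((k : ℝ) + 1) ^ (-1 - ε / 2) := by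
          have hle : ((k : ℝ) + 1) ^ (-1 - ε) ≤ ((k : ℝ) + 1) ^ (-1 - ε / 2) :=
            Real.rpow_le_rpow_of_exponent_le hk1 (by linarith)
          nlinarith

lemma differentiableAt_T {z₀ : ℂ} (h : 0 < z₀.re) : DifferentiableAt ℂ T z₀ := by
  set ε := z₀.re / 2 with hεdef
  have hε0 : 0 < ε := half_pos h
  set B := ‖z₀‖ + ε with hBdef
  have hB : 0 ≤ B := by positivity
  have key := hasDerivAt_tsum_of_isPreconnected (summable_bound hε0 hB)
    (Metric.isOpen_ball (x := z₀) (ε := ε)) ((convex_ball z₀ ε).isPreconnected)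
    (fun k y _ => hasDerivAt_g k y) ?_
    (Metric.mem_ball_self hε0) (summable_g h) (Metric.mem_ball_self hε0)
  · exact key.differentiableAt
  · intro k y hy
    have hdist : dist y z₀ < ε := Metric.mem_ball.1 hy
    have hre : ε ≤ y.re := by
      have h1 : |(y - z₀).re| ≤ ‖y - z₀‖ := Complex.abs_re_le_norm _
      rw [Complex.sub_re] at h1
      rw [Complex.dist_eq] at hdist
      have := abs_le.1 h1
      have := this.1
      simp only [hεdef] at *
      linarith [this, hdist.le]
    have hyre : 0 < y.re := lt_of_lt_of_le hε0 hre
    have hyn : ‖y‖ ≤ B := by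
      calc ‖y‖ = ‖z₀ + (y - z₀)‖ := by ring_nf
        _ ≤ ‖z₀‖ + ‖y - z₀‖ := norm_add_le _ _
        _ ≤ ‖z₀‖ + ε := by
            have : ‖y - z₀‖ = dist y z₀ := (dist_eq_norm _ _).symm
            linarith
    have hk0 : (0 : ℝ) ≤ (k : ℝ) := Nat.cast_nonneg k
    have hlogpos : 0 ≤ Real.log (2 * (k : ℝ) + 2) := Real.log_nonneg (by linarith)
    calc ‖g' k y‖ ≤ (‖y‖ * Real.log (2 * (k : ℝ) + 2) + 1) * (2 * (k : ℝ) + 1) ^ (-y.re - 1) :=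
        norm_g'_le hyre k
      _ ≤ (B * Real.log (2 * (k : ℝ) + 2) + 1) * ((k : ℝ) + 1) ^ (-1 - ε) := by
          have h1 : (2 * (k : ℝ) + 1) ^ (-y.re - 1) ≤ (2 * (k : ℝ) + 1) ^ (-1 - ε) :=
            Real.rpow_le_rpow_of_exponent_le (by linarith) (by linarith)
          have h2 : (2 * (k : ℝ) + 1) ^ (-1 - ε) ≤ ((k : ℝ) + 1) ^ (-1 - ε) :=
            Real.rpow_le_rpow_of_nonpos (by positivity) (by linarith) (by linarith)
          have h3 : 0 ≤ (2 * (k : ℝ) + 1) ^ (-y.re - 1) := Real.rpow_nonneg (by positivity) _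
          have h4 : ‖y‖ * Real.log (2 * (k : ℝ) + 2) + 1
              ≤ B * Real.log (2 * (k : ℝ) + 2) + 1 := by nlinarith [norm_nonneg y]
          exact mul_le_mul h4 (h1.trans h2) h3 (by nlinarith [norm_nonneg y])

end EtaLandau

namespace EtaLandau

lemma preconnected_U : IsPreconnected ({z : ℂ | 0 < z.re} ∩ {(1 : ℂ)}ᶜ) := by
  set A : Set ℂ := {z | 0 < z.re ∧ z.re < 1} with hA
  set Bs : Set ℂ := {z | 1 < z.re} with hB
  set C : Set ℂ := {z | 0 < z.re ∧ 0 < z.im} with hC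
  set D : Set ℂ := {z | 0 < z.re ∧ z.im < 0} with hD
  have pA : IsPreconnected A := by
    have : A = {z : ℂ | 0 < z.re} ∩ {z : ℂ | z.re < 1} := rfl
    rw [this]
    exact ((convex_halfSpace_re_gt 0).inter (convex_halfSpace_re_lt 1)).isPreconnected
  have pB : IsPreconnected Bs := (convex_halfSpace_re_gt 1).isPreconnected
  have pC : IsPreconnected C := by
    have : C = {z : ℂ | 0 < z.re} ∩ {z : ℂ | 0 < z.im} := rfl
    rw [this]
    exact ((convex_halfSpace_re_gt 0).inter (convex_halfSpace_im_gt 0)).isPreconnected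
  have pD : IsPreconnected D := by
    have : D = {z : ℂ | 0 < z.re} ∩ {z : ℂ | z.im < 0} := rfl
    rw [this]
    exact ((convex_halfSpace_re_gt 0).inter (convex_halfSpace_im_lt 0)).isPreconnected
  have pAC : IsPreconnected (A ∪ C) := by
    apply pA.union ((1 / 2 : ℂ) + Complex.I) _ _ pC
    · constructor <;> simp <;> norm_num
    · constructor <;> simp
  have pACD : IsPreconnected ((A ∪ C) ∪ D) := by
    apply pAC.union ((1 / 2 : ℂ) - Complex.I) _ _ pD
    · left; constructor <;> simp <;> norm_num
    · constructor <;> simp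
  have pAll : IsPreconnected (((A ∪ C) ∪ D) ∪ Bs) := by
    apply pACD.union ((2 : ℂ) + Complex.I) _ _ pB
    · left; right; constructor <;> simp
    · simp [hB]
  have hU : {z : ℂ | 0 < z.re} ∩ {(1 : ℂ)}ᶜ = ((A ∪ C) ∪ D) ∪ Bs := by
    ext z
    simp only [mem_inter_iff, mem_setOf_eq, mem_compl_iff, mem_singleton_iff, mem_union, hA, hB,
      hC, hD]
    constructor
    · rintro ⟨hre, hne⟩
      rcases lt_trichotomy z.im 0 with him | him | him
      · exact Or.inl (Or.inr ⟨hre, him⟩)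
      · rcases lt_trichotomy z.re 1 with h1 | h1 | h1
        · exact Or.inl (Or.inl (Or.inl ⟨hre, h1⟩))
        · exact absurd (Complex.ext h1 him) hne
        · exact Or.inr h1
      · exact Or.inl (Or.inl (Or.inr ⟨hre, him⟩))
    · rintro (((⟨h1, h2⟩ | ⟨h1, h2⟩) | ⟨h1, h2⟩) | h1)
      · exact ⟨h1, fun he => by rw [he] at h2; simp at h2⟩
      · exact ⟨h1, fun he => by rw [he] at h2; simp at h2⟩
      · exact ⟨h1, fun he => by rw [he] at h2; simp at h2⟩
      · refine ⟨lt_trans one_pos h1, fun he => by rw [he] at h1; simp at h1⟩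
  rw [hU]
  exact pAll

lemma T_eq {z : ℂ} (hz : 0 < z.re) (hz1 : z ≠ 1) :
    T z = (1 - (2 : ℂ) ^ (1 - z)) * riemannZeta z := by
  set U : Set ℂ := {z : ℂ | 0 < z.re} ∩ {(1 : ℂ)}ᶜ with hUdef
  have hUopen : IsOpen U :=
    (isOpen_lt continuous_const Complex.continuous_re).inter isOpen_compl_singleton
  have hTa : AnalyticOnNhd ℂ T U := by
    apply DifferentiableOn.analyticOnNhd _ hUopen
    exact fun w hw => (differentiableAt_T hw.1).differentiableWithinAt
  have hha : AnalyticOnNhd ℂ (fun w => (1 - (2 : ℂ) ^ (1 - w)) * riemannZeta w) U := by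
    apply DifferentiableOn.analyticOnNhd _ hUopen
    intro w hw
    apply DifferentiableAt.differentiableWithinAt
    have h1 : DifferentiableAt ℂ (fun w : ℂ => 1 - (2 : ℂ) ^ (1 - w)) w := by
      apply DifferentiableAt.sub (differentiableAt_const 1)
      exact ((differentiableAt_const 1).sub differentiableAt_id).const_cpow (Or.inl two_ne_zero)
    exact h1.mul (differentiableAt_riemannZeta hw.2)
  have h2U : (2 : ℂ) ∈ U := by
    refine ⟨by simp, by simp⟩
  have hev : T =ᶠ[nhds (2 : ℂ)] fun w => (1 - (2 : ℂ) ^ (1 - w)) * riemannZeta w := by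
    have hopen : IsOpen {w : ℂ | 1 < w.re} := isOpen_lt continuous_const Complex.continuous_re
    have hmem : {w : ℂ | 1 < w.re} ∈ nhds (2 : ℂ) := hopen.mem_nhds (by simp)
    exact Filter.eventually_of_mem hmem fun w hw => T_eq_of_one_lt hw
  exact hTa.eqOn_of_preconnected_of_eventuallyEq hha preconnected_U h2U hev ⟨hz, hz1⟩

end EtaLandau

open EtaLandau in
/-- Landau's relation: for `Re s > 0`, `s ≠ 1`, the partial sums of the Dirichlet eta
series converge to `(1 - 2^{1-s}) ζ(s)`. -/
theorem eta_partial_sums_tendsto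
    (s : ℂ) (hs : 0 < s.re) (hs1 : s ≠ 1) :
    Tendsto
      (fun N : ℕ => ∑ n ∈ Finset.range N, (-1 : ℂ) ^ n / ((n : ℂ) + 1) ^ s)
      atTop
      (nhds ((1 - (2 : ℂ) ^ (1 - s)) * riemannZeta s)) := by
  have h := tendsto_eta hs
  rwa [T_eq hs hs1] at h
end
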